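/- arXiv:1608.07443 — 8 statements merged into one kernel-verified Lean document; each statement's English description precedes it below -/
import Mathlib

section
/- Nonnegativity is preserved in the SIR model: if S(0) ≥ 0 and I(0) ≥ 0, then for all t ≥ 0, S(t) ≥ 0 and I(t) ≥ 0. -/
lemma sir_aux (a f : ℝ → ℝ) (ha : Continuous a)
    (hf : ∀ t ≥ (0 : ℝ), HasDerivAt f (a t * f t) t) (h0 : 0 ≤ f 0) :
    ∀ t ≥ (0 : ℝ), 0 ≤ f t := by
  intro T hT
  set g : ℝ → ℝ := fun t => ∫ s in (0:ℝ)..t, a s with hg_def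
  have hg : ∀ t : ℝ, HasDerivAt g (a t) t := fun t =>
    intervalIntegral.integral_hasDerivAt_right (ha.intervalIntegrable _ _)
      (ha.stronglyMeasurableAtFilter _ _) ha.continuousAt
  set F : ℝ → ℝ := fun t => f t * Real.exp (-g t) with hF_def
  have hF : ∀ t ∈ Set.Ico (0:ℝ) T, HasDerivWithinAt F 0 (Set.Ici t) t := by
    intro t ht
    have h1 : HasDerivAt (fun x => Real.exp (-g x)) (Real.exp (-g t) * (-(a t))) t :=
      ((hg t).neg).exp
    have h2 := (hf t ht.1).mul h1
    have h3 : a t * f t * Real.exp (-g t) + f t * (Real.exp (-g t) * -a t) = 0 := by ring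
    rw [h3] at h2
    exact h2.hasDerivWithinAt
  have hFc : ContinuousOn F (Set.Icc 0 T) := fun t ht => by
    have hfc : ContinuousAt f t := (hf t ht.1).continuousAt
    have hgc : ContinuousAt g t := (hg t).continuousAt
    exact (hfc.mul ((hgc.neg).rexp)).continuousWithinAt
  have hconst := constant_of_has_deriv_right_zero hFc hF T (Set.right_mem_Icc.2 hT)
  have hF0 : F 0 = f 0 := by simp [hF_def, hg_def]
  have hFT : 0 ≤ F T := by rw [hconst, hF0]; exact h0
  have : 0 ≤ f T * Real.exp (-g T) := hFT
  have hexp : 0 < Real.exp (-g T) := Real.exp_pos _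
  nlinarith [hexp]

/-- Nonnegativity is preserved in the SIR model. -/
theorem sir_nonneg_preserved
    (b c : ℝ) (hb : 0 < b) (hc : 0 < c) (S I R : ℝ → ℝ)
    (hS : ∀ t ≥ (0 : ℝ), HasDerivAt S (-(b * I t * S t)) t)
    (hI : ∀ t ≥ (0 : ℝ), HasDerivAt I (b * I t * S t - c * I t) t)
    (hR : ∀ t ≥ (0 : ℝ), HasDerivAt R (c * I t) t)
    (hS0 : 0 ≤ S 0) (hI0 : 0 ≤ I 0) :
    ∀ t ≥ (0 : ℝ), 0 ≤ S t ∧ 0 ≤ I t := by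
  have hmax : Continuous (fun t : ℝ => max t 0) := continuous_id.max continuous_const
  have hmem : ∀ t : ℝ, max t 0 ∈ Set.Ici (0:ℝ) := fun t => le_max_right t 0
  have hIcont : ContinuousOn I (Set.Ici 0) := fun t ht =>
    ((hI t ht).continuousAt).continuousWithinAt
  have hScont : ContinuousOn S (Set.Ici 0) := fun t ht =>
    ((hS t ht).continuousAt).continuousWithinAt
  have hJ : Continuous (fun t => I (max t 0)) := hIcont.comp_continuous hmax hmem
  have hSg : Continuous (fun t => S (max t 0)) := hScont.comp_continuous hmax hmem
  have hSnn : ∀ t ≥ (0:ℝ), 0 ≤ S t := by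
    apply sir_aux (fun t => -(b * I (max t 0))) S ((continuous_const.mul hJ).neg) _ hS0
    intro t ht
    have h : -(b * I (max t 0)) * S t = -(b * I t * S t) := by
      rw [max_eq_left ht]; ring
    rw [h]; exact hS t ht
  have hInn : ∀ t ≥ (0:ℝ), 0 ≤ I t := by
    apply sir_aux (fun t => b * S (max t 0) - c) I ((continuous_const.mul hSg).sub continuous_const) _ hI0
    intro t ht
    have h : (b * S (max t 0) - c) * I t = b * I t * S t - c * I t := by
      rw [max_eq_left ht]; ring
    rw [h]; exact hI t ht
  exact fun t ht => ⟨hSnn t ht, hInn t ht⟩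
end

section
/- Convergence of the compartments: if S(0) ≥ 0, I(0) ≥ 0, and R(0) ≥ 0, then S(t) converges to a limit S(∞) as t → ∞, R(t) converges to a limit R(∞) as t → ∞, and I(t) converges to N - S(∞) - R(∞) as t → ∞, where N = S(0) + I(0) + R(0). -/
open Filter Set MeasureTheory intervalIntegral

/-- FTC helper: antiderivative of a continuous function. -/
lemma hasDerivAt_primitive_of_continuous {g : ℝ → ℝ} (hg : Continuous g) (t : ℝ) :
    HasDerivAt (fun u => ∫ s in (0:ℝ)..u, g s) (g t) t :=
  integral_hasDerivAt_right (hg.intervalIntegrable 0 t)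
    (hg.stronglyMeasurable.stronglyMeasurableAtFilter) hg.continuousAt

/-- A function with vanishing derivative on `[0, ∞)` is constant there. -/
lemma const_of_deriv_zero_on_Ici {f : ℝ → ℝ}
    (hf : ∀ t ≥ (0:ℝ), HasDerivAt f 0 t) : ∀ t ≥ (0:ℝ), f t = f 0 := by
  intro t ht
  have hcont : ContinuousOn f (Icc 0 t) := fun x hx =>
    ((hf x hx.1).continuousAt).continuousWithinAt
  exact constant_of_has_deriv_right_zero hcont
    (fun x hx => (hf x hx.1).hasDerivWithinAt) t (right_mem_Icc.2 ht)

/-- Convergence of the compartments of the SIR model. -/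
theorem sir_compartments_converge
    (b c : ℝ) (hb : 0 < b) (hc : 0 < c) (S I R : ℝ → ℝ)
    (hS : ∀ t ≥ (0 : ℝ), HasDerivAt S (-(b * I t * S t)) t)
    (hI : ∀ t ≥ (0 : ℝ), HasDerivAt I (b * I t * S t - c * I t) t)
    (hR : ∀ t ≥ (0 : ℝ), HasDerivAt R (c * I t) t)
    (hS0 : 0 ≤ S 0) (hI0 : 0 ≤ I 0) (hR0 : 0 ≤ R 0) :
    ∃ Sinf Rinf : ℝ,
      Filter.Tendsto S Filter.atTop (nhds Sinf) ∧
      Filter.Tendsto R Filter.atTop (nhds Rinf) ∧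
      Filter.Tendsto I Filter.atTop (nhds (S 0 + I 0 + R 0 - Sinf - Rinf)) := by
  have hScont : ∀ t ≥ (0:ℝ), ContinuousAt S t := fun t ht => (hS t ht).continuousAt
  have hIcont : ∀ t ≥ (0:ℝ), ContinuousAt I t := fun t ht => (hI t ht).continuousAt
  -- continuous coefficient functions on all of ℝ
  have hmax : Continuous (fun s : ℝ => max s 0) := continuous_id.max continuous_const
  have hgI : Continuous (fun s : ℝ => b * I (max s 0)) := by
    rw [continuous_iff_continuousAt]
    intro s
    exact continuousAt_const.mul
      (ContinuousAt.comp (g := I) (f := fun s : ℝ => max s 0)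
        (hIcont _ (le_max_right s 0)) hmax.continuousAt)
  have hgS : Continuous (fun s : ℝ => b * S (max s 0) - c) := by
    rw [continuous_iff_continuousAt]
    intro s
    exact (continuousAt_const.mul
      (ContinuousAt.comp (g := S) (f := fun s : ℝ => max s 0)
        (hScont _ (le_max_right s 0)) hmax.continuousAt)).sub continuousAt_const
  set J : ℝ → ℝ := fun u => ∫ s in (0:ℝ)..u, b * I (max s 0) with hJ
  set K : ℝ → ℝ := fun u => ∫ s in (0:ℝ)..u, (b * S (max s 0) - c) with hK
  have hJd : ∀ t, HasDerivAt J (b * I (max t 0)) t := fun t =>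
    hasDerivAt_primitive_of_continuous hgI t
  have hKd : ∀ t, HasDerivAt K (b * S (max t 0) - c) t := fun t =>
    hasDerivAt_primitive_of_continuous hgS t
  -- S t * exp (J t) is constant on [0,∞)
  have hSc : ∀ t ≥ (0:ℝ), S t * Real.exp (J t) = S 0 := by
    have h0 : ∀ t ≥ (0:ℝ), S t * Real.exp (J t) = S 0 * Real.exp (J 0) := by
      apply const_of_deriv_zero_on_Ici
      intro t ht
      have hd : HasDerivAt (fun u => S u * Real.exp (J u))
          (-(b * I t * S t) * Real.exp (J t) +
            S t * (Real.exp (J t) * (b * I (max t 0)))) t :=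
        (hS t ht).mul ((hJd t).exp)
      rw [max_eq_left ht] at hd
      convert hd using 1
      ring
    intro t ht
    rw [h0 t ht, hJ]
    simp [intervalIntegral.integral_same]
  -- I t * exp (-(K t)) is constant on [0,∞)
  have hIc : ∀ t ≥ (0:ℝ), I t * Real.exp (-(K t)) = I 0 := by
    have h0 : ∀ t ≥ (0:ℝ), I t * Real.exp (-(K t)) = I 0 * Real.exp (-(K 0)) := by
      apply const_of_deriv_zero_on_Ici
      intro t ht
      have hd : HasDerivAt (fun u => I u * Real.exp (-(K u)))
          ((b * I t * S t - c * I t) * Real.exp (-(K t)) +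
            I t * (Real.exp (-(K t)) * -(b * S (max t 0) - c))) t :=
        (hI t ht).mul (((hKd t).neg).exp)
      rw [max_eq_left ht] at hd
      convert hd using 1
      ring
    intro t ht
    rw [h0 t ht, hK]
    simp [intervalIntegral.integral_same]
  -- nonnegativity
  have hSnn : ∀ t ≥ (0:ℝ), 0 ≤ S t := by
    intro t ht
    have h1 : S t = S 0 / Real.exp (J t) := by
      rw [← hSc t ht]
      field_simp
    rw [h1]
    exact div_nonneg hS0 (Real.exp_pos _).le
  have hInn : ∀ t ≥ (0:ℝ), 0 ≤ I t := by
    intro t ht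
    have h1 : I t = I 0 / Real.exp (-(K t)) := by
      rw [← hIc t ht]
      field_simp
    rw [h1]
    exact div_nonneg hI0 (Real.exp_pos _).le
  -- total population is constant
  have hsum : ∀ t ≥ (0:ℝ), S t + I t + R t = S 0 + I 0 + R 0 := by
    apply const_of_deriv_zero_on_Ici
    intro t ht
    have hd : HasDerivAt (fun u => S u + I u + R u)
        (-(b * I t * S t) + (b * I t * S t - c * I t) + c * I t) t :=
      ((hS t ht).add (hI t ht)).add (hR t ht)
    convert hd using 1
    ring
  -- S is antitone on [0,∞), R is monotone on [0,∞)
  have hSanti : AntitoneOn S (Ici 0) := by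
    apply antitoneOn_of_hasDerivWithinAt_nonpos (f' := fun t => -(b * I t * S t))
      (convex_Ici 0)
    · exact fun x hx => (hScont x hx).continuousWithinAt
    · intro x hx
      rw [interior_Ici] at hx
      exact ((hS x (le_of_lt hx)).hasDerivWithinAt)
    · intro x hx
      rw [interior_Ici] at hx
      have := mul_nonneg (mul_nonneg hb.le (hInn x hx.le)) (hSnn x hx.le)
      linarith
  have hRmono : MonotoneOn R (Ici 0) := by
    apply monotoneOn_of_hasDerivWithinAt_nonneg (f' := fun t => c * I t) (convex_Ici 0)
    · exact fun x hx => ((hR x hx).continuousAt).continuousWithinAt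
    · intro x hx
      rw [interior_Ici] at hx
      exact ((hR x (le_of_lt hx)).hasDerivWithinAt)
    · intro x hx
      rw [interior_Ici] at hx
      exact mul_nonneg hc.le (hInn x hx.le)
  -- shifted versions, globally monotone
  set S' : ℝ → ℝ := fun t => S (max t 0) with hS'
  set R' : ℝ → ℝ := fun t => R (max t 0) with hR'
  have hS'anti : Antitone S' := fun x y hxy =>
    hSanti (le_max_right x 0) (le_max_right y 0) (max_le_max hxy le_rfl)
  have hR'mono : Monotone R' := fun x y hxy =>
    hRmono (le_max_right x 0) (le_max_right y 0) (max_le_max hxy le_rfl)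
  have hS'bdd : BddBelow (range S') := by
    refine ⟨0, ?_⟩
    rintro _ ⟨t, rfl⟩
    exact hSnn _ (le_max_right t 0)
  have hR'bdd : BddAbove (range R') := by
    refine ⟨S 0 + I 0 + R 0, ?_⟩
    rintro _ ⟨t, rfl⟩
    have h1 := hsum _ (le_max_right t 0)
    have h2 := hSnn _ (le_max_right t 0)
    have h3 := hInn _ (le_max_right t 0)
    linarith
  have hS'tend : Tendsto S' atTop (nhds (⨅ i, S' i)) :=
    tendsto_atTop_ciInf hS'anti hS'bdd
  have hR'tend : Tendsto R' atTop (nhds (⨆ i, R' i)) :=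
    tendsto_atTop_ciSup hR'mono hR'bdd
  have heq : ∀ᶠ t : ℝ in atTop, max t 0 = t := by
    filter_upwards [eventually_ge_atTop (0:ℝ)] with t ht
    exact max_eq_left ht
  have hStend : Tendsto S atTop (nhds (⨅ i, S' i)) := by
    apply hS'tend.congr'
    filter_upwards [heq] with t ht
    show S (max t 0) = S t
    rw [ht]
  have hRtend : Tendsto R atTop (nhds (⨆ i, R' i)) := by
    apply hR'tend.congr'
    filter_upwards [heq] with t ht
    show R (max t 0) = R t
    rw [ht]
  refine ⟨⨅ i, S' i, ⨆ i, R' i, hStend, hRtend, ?_⟩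
  have hItend : Tendsto (fun t => S 0 + I 0 + R 0 - S t - R t) atTop
      (nhds (S 0 + I 0 + R 0 - (⨅ i, S' i) - (⨆ i, R' i))) :=
    (tendsto_const_nhds.sub hStend).sub hRtend
  apply hItend.congr'
  filter_upwards [eventually_ge_atTop (0:ℝ)] with t ht
  have := hsum t ht
  linarith
end

section
/- Extinction of the informed compartment: if S(0) ≥ 0, I(0) ≥ 0, and R(0) ≥ 0, then I(t) → 0 as t → ∞. -/
open Filter Set Real MeasureTheory intervalIntegral

/-- If `f` has zero derivative at every `t ≥ 0`, then `f` is constant on `[0, ∞)`. -/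
private lemma sir_const_of_deriv0 (f : ℝ → ℝ) (h : ∀ t ≥ (0:ℝ), HasDerivAt f 0 t) :
    ∀ t ≥ (0:ℝ), f t = f 0 := by
  intro t ht
  exact constant_of_has_deriv_right_zero
    (fun x hx => (h x hx.1).continuousAt.continuousWithinAt)
    (fun x hx => (h x hx.1).hasDerivWithinAt) t ⟨ht, le_rfl⟩

/-- Antiderivative of a continuous function. -/
private lemma sir_integral_hasDerivAt (a : ℝ → ℝ) (ha : Continuous a) (t : ℝ) :
    HasDerivAt (fun u => ∫ x in (0:ℝ)..u, a x) (a t) t :=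
  integral_hasDerivAt_right (ha.intervalIntegrable _ _)
    ha.aestronglyMeasurable.stronglyMeasurableAtFilter ha.continuousAt

/-- Sign preservation for linear ODEs. -/
private lemma sir_ode_nonneg (a f : ℝ → ℝ) (ha : Continuous a)
    (hf : ∀ t ≥ (0:ℝ), HasDerivAt f (a t * f t) t) (h0 : 0 ≤ f 0) :
    ∀ t ≥ (0:ℝ), 0 ≤ f t := by
  set u : ℝ → ℝ := fun t => ∫ x in (0:ℝ)..t, a x with hu
  have hud : ∀ t, HasDerivAt u (a t) t := sir_integral_hasDerivAt a ha
  have hg : ∀ t ≥ (0:ℝ), HasDerivAt (fun s => f s * Real.exp (-(u s))) 0 t := by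
    intro t ht
    have h1 : HasDerivAt (fun s => Real.exp (-(u s))) (-(a t) * Real.exp (-(u t))) t := by
      have := (Real.hasDerivAt_exp (-(u t))).comp t ((hud t).neg)
      exact this.congr_deriv (by ring)
    have := (hf t ht).mul h1
    exact this.congr_deriv (by ring)
  have hc := sir_const_of_deriv0 _ hg
  intro t ht
  have hct := hc t ht
  simp only [hu] at hct
  have h00 : (∫ x in (0:ℝ)..(0:ℝ), a x) = 0 := intervalIntegral.integral_same
  rw [h00, neg_zero, Real.exp_zero, mul_one] at hct
  have hexp : 0 < Real.exp (-(∫ x in (0:ℝ)..t, a x)) := Real.exp_pos _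
  nlinarith [mul_nonneg h0 hexp.le]

/-- Monotonicity on `[T, ∞)` from a nonnegative derivative. -/
private lemma sir_mono (T : ℝ) (f f' : ℝ → ℝ) (h : ∀ t ≥ T, HasDerivAt f (f' t) t)
    (h' : ∀ t ≥ T, 0 ≤ f' t) : MonotoneOn f (Ici T) := by
  apply monotoneOn_of_deriv_nonneg (convex_Ici T)
    (fun x hx => (h x hx).continuousAt.continuousWithinAt)
  · intro x hx
    rw [interior_Ici] at hx
    exact ((h x hx.le).differentiableAt).differentiableWithinAt
  · intro x hx
    rw [interior_Ici] at hx
    rw [(h x hx.le).deriv]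
    exact h' x hx.le

/-- Extinction of the informed compartment: `I t → 0` as `t → ∞`. -/
theorem sir_informed_tendsto_zero
    (b c : ℝ) (hb : 0 < b) (hc : 0 < c) (S I R : ℝ → ℝ)
    (hS : ∀ t ≥ (0 : ℝ), HasDerivAt S (-(b * I t * S t)) t)
    (hI : ∀ t ≥ (0 : ℝ), HasDerivAt I (b * I t * S t - c * I t) t)
    (hR : ∀ t ≥ (0 : ℝ), HasDerivAt R (c * I t) t)
    (hS0 : 0 ≤ S 0) (hI0 : 0 ≤ I 0) (hR0 : 0 ≤ R 0) :
    Filter.Tendsto I Filter.atTop (nhds 0) := by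
  -- continuity of S and I at nonnegative points, extended continuously to ℝ
  have hmax : Continuous (fun t : ℝ => max t 0) := continuous_id.max continuous_const
  have hScont : ∀ t ≥ (0:ℝ), ContinuousAt S t := fun t ht => (hS t ht).continuousAt
  have hIcont : ∀ t ≥ (0:ℝ), ContinuousAt I t := fun t ht => (hI t ht).continuousAt
  have hShat : Continuous (fun t : ℝ => S (max t 0)) := by
    rw [continuous_iff_continuousAt]
    intro t
    exact ContinuousAt.comp (x := t) (g := S) (hScont _ (le_max_right t 0)) hmax.continuousAt
  have hIhat : Continuous (fun t : ℝ => I (max t 0)) := by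
    rw [continuous_iff_continuousAt]
    intro t
    exact ContinuousAt.comp (x := t) (g := I) (hIcont _ (le_max_right t 0)) hmax.continuousAt
  -- nonnegativity of I
  have hIpos : ∀ t ≥ (0:ℝ), 0 ≤ I t := by
    apply sir_ode_nonneg (fun t => b * S (max t 0) - c) I
      (((continuous_const.mul hShat).sub continuous_const)) _ hI0
    intro t ht
    have := hI t ht
    convert this using 1
    have h' : max t 0 = t := max_eq_left ht
    simp only [h']; ring
  -- nonnegativity of S
  have hSpos : ∀ t ≥ (0:ℝ), 0 ≤ S t := by
    apply sir_ode_nonneg (fun t => -(b * I (max t 0))) S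
      ((continuous_const.mul hIhat).neg) _ hS0
    intro t ht
    have := hS t ht
    convert this using 1
    have h' : max t 0 = t := max_eq_left ht
    simp only [h']; ring
  -- the total population is constant
  set N : ℝ := S 0 + I 0 + R 0 with hN
  have hsum : ∀ t ≥ (0:ℝ), S t + I t + R t = N := by
    apply sir_const_of_deriv0 (fun t => S t + I t + R t)
    intro t ht
    have := ((hS t ht).add (hI t ht)).add (hR t ht)
    exact this.congr_deriv (by ring)
  -- R is monotone on [0,∞), S is antitone
  have hRmono : MonotoneOn R (Ici 0) :=
    sir_mono 0 R (fun t => c * I t) hR (fun t ht => mul_nonneg hc.le (hIpos t ht))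
  have hSanti : MonotoneOn (fun t => -S t) (Ici 0) := by
    apply sir_mono 0 _ (fun t => b * I t * S t)
    · exact fun t ht => (hS t ht).neg.congr_deriv (by ring)
    · exact fun t ht => mul_nonneg (mul_nonneg hb.le (hIpos t ht)) (hSpos t ht)
  -- bounds
  have hRle : ∀ t ≥ (0:ℝ), R t ≤ N := by
    intro t ht
    have := hsum t ht
    nlinarith [hIpos t ht, hSpos t ht]
  have hSle : ∀ t ≥ (0:ℝ), S t ≤ N := by
    intro t ht
    have h0 : R 0 ≤ R t := hRmono (self_mem_Ici) ht ht
    have := hsum t ht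
    nlinarith [hIpos t ht, hR0]
  -- extended monotone functions
  set Rh : ℝ → ℝ := fun t => R (max t 0) with hRh
  set Sh : ℝ → ℝ := fun t => S (max t 0) with hSh
  have hRhMono : Monotone Rh := fun s t hst =>
    hRmono (le_max_right s 0) (le_max_right t 0) (max_le_max hst le_rfl)
  have hShAnti : Antitone Sh := fun s t hst => by
    have := hSanti (le_max_right s 0) (le_max_right t 0) (max_le_max hst le_rfl)
    simpa [Sh] using this
  have hRhBdd : BddAbove (Set.range Rh) := by
    refine ⟨N, ?_⟩
    rintro x ⟨t, rfl⟩
    exact hRle _ (le_max_right t 0)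
  have hShBdd : BddBelow (Set.range Sh) := by
    refine ⟨0, ?_⟩
    rintro x ⟨t, rfl⟩
    exact hSpos _ (le_max_right t 0)
  obtain ⟨lR, hlR⟩ : ∃ l, Tendsto Rh atTop (nhds l) := ⟨_, tendsto_atTop_ciSup hRhMono hRhBdd⟩
  obtain ⟨lS, hlS⟩ : ∃ l, Tendsto Sh atTop (nhds l) := ⟨_, tendsto_atTop_ciInf hShAnti hShBdd⟩
  have heq : ∀ᶠ t : ℝ in atTop, max t 0 = t := by
    filter_upwards [eventually_ge_atTop (0:ℝ)] with t ht
    exact max_eq_left ht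
  have hRee : Rh =ᶠ[atTop] R := by
    filter_upwards [heq] with t ht
    simp [Rh, ht]
  have hSee : Sh =ᶠ[atTop] S := by
    filter_upwards [heq] with t ht
    simp [Sh, ht]
  have hRtend : Tendsto R atTop (nhds lR) := hlR.congr' hRee
  have hStend : Tendsto S atTop (nhds lS) := hlS.congr' hSee
  -- I converges to L = N - lS - lR
  set L : ℝ := N - lS - lR with hL
  have hItend : Tendsto I atTop (nhds L) := by
    have : Tendsto (fun t => N - S t - R t) atTop (nhds (N - lS - lR)) :=
      (tendsto_const_nhds.sub hStend).sub hRtend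
    apply this.congr'
    filter_upwards [eventually_ge_atTop (0:ℝ)] with t ht
    have := hsum t ht
    linarith
  -- L ≥ 0
  have hLnn : 0 ≤ L := by
    apply ge_of_tendsto hItend
    filter_upwards [eventually_ge_atTop (0:ℝ)] with t ht using hIpos t ht
  -- L = 0
  have hL0 : L = 0 := by
    by_contra h
    have hLpos : 0 < L := lt_of_le_of_ne hLnn (Ne.symm h)
    -- eventually I t ≥ L/2
    have hev : ∀ᶠ t in atTop, L / 2 ≤ I t := by
      filter_upwards [hItend.eventually (lt_mem_nhds (show L / 2 < L by linarith))] with t ht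
      exact ht.le
    obtain ⟨T₀, hT₀⟩ := hev.exists_forall_of_atTop
    set T : ℝ := max T₀ 0 with hT
    have hTnn : (0:ℝ) ≤ T := le_max_right _ _
    set k : ℝ := c * (L / 2) with hk
    have hkpos : 0 < k := mul_pos hc (by linarith)
    -- h t = R t - k * t is monotone on [T, ∞)
    have hmono2 : MonotoneOn (fun t => R t - k * t) (Ici T) := by
      apply sir_mono T _ (fun t => c * I t - k)
      · intro t ht
        have hderiv : HasDerivAt (fun t => k * t) k t := by
          simpa using (hasDerivAt_id t).const_mul k
        exact (hR t (hTnn.trans ht)).sub hderiv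
      · intro t ht
        have hIt : L / 2 ≤ I t := hT₀ t ((le_max_left _ _).trans ht)
        have : k ≤ c * I t := by
          rw [hk]; exact mul_le_mul_of_nonneg_left hIt hc.le
        linarith
    -- contradiction at large time
    set t₁ : ℝ := T + (N - R T + 1) / k with ht₁
    have hRTN : R T ≤ N := hRle T hTnn
    have ht₁T : T ≤ t₁ := by
      rw [ht₁]
      have : 0 ≤ (N - R T + 1) / k := div_nonneg (by linarith) hkpos.le
      linarith
    have hmm : R T - k * T ≤ R t₁ - k * t₁ := hmono2 (self_mem_Ici) ht₁T ht₁T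
    have hcalc : k * t₁ = k * T + (N - R T + 1) := by
      rw [ht₁, mul_add, mul_div_cancel₀ _ hkpos.ne']
    have hRt₁ : R t₁ ≤ N := hRle t₁ (hTnn.trans ht₁T)
    linarith
  rw [hL0] at hItend
  exact hItend
end

section
/- Proposition 1, subthreshold case: if the effective reproduction number satisfies R_e = b·S(0)/c ≤ 1, and S(0) ≥ 0, I(0) ≥ 0, R(0) ≥ 0, then I is nonincreasing on [0,∞) and I(t) → 0 as t → ∞. -/
open Set Filter Real

/-- If `f' = g * f` with `g` continuous on `[0,∞)` and `f 0 ≥ 0`, then `f ≥ 0` on `[0,∞)`. -/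
lemma sir_aux_nonneg (f g : ℝ → ℝ)
    (hf : ∀ t ≥ (0 : ℝ), HasDerivAt f (g t * f t) t)
    (hg : ContinuousOn g (Set.Ici 0))
    (hf0 : 0 ≤ f 0) : ∀ t ≥ (0 : ℝ), 0 ≤ f t := by
  intro t1 ht1
  by_contra h
  push_neg at h
  have hfc : ContinuousOn f (Set.Icc 0 t1) := fun x hx =>
    (hf x hx.1).continuousAt.continuousWithinAt
  -- intermediate value: f hits 0 somewhere in [0, t1]
  have h0 : (0 : ℝ) ∈ Set.Icc (f t1) (f 0) := ⟨le_of_lt h, hf0⟩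
  obtain ⟨t0, ht0mem, ht0⟩ := intermediate_value_Icc' ht1 hfc h0
  -- bound on g on [0, t1]
  obtain ⟨K, hK⟩ := (isCompact_Icc : IsCompact (Set.Icc (0:ℝ) t1)).exists_bound_of_continuousOn
    (hg.mono (fun x hx => hx.1))
  -- Gronwall on [t0, t1]
  have hgron := norm_le_gronwallBound_of_norm_deriv_right_le
    (f := f) (f' := fun x => g x * f x) (δ := 0) (K := K) (ε := 0) (a := t0) (b := t1)
    (hfc.mono (Set.Icc_subset_Icc_left ht0mem.1))
    (fun x hx => (hf x (le_trans ht0mem.1 hx.1)).hasDerivWithinAt)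
    (by simp [ht0])
    (fun x hx => by
      have hx' : x ∈ Set.Icc (0:ℝ) t1 := ⟨le_trans ht0mem.1 hx.1, le_of_lt hx.2⟩
      calc ‖g x * f x‖ = ‖g x‖ * ‖f x‖ := norm_mul _ _
        _ ≤ K * ‖f x‖ := mul_le_mul_of_nonneg_right (hK x hx') (norm_nonneg _)
        _ ≤ K * ‖f x‖ + 0 := by simp)
  have := hgron t1 ⟨ht0mem.2, le_refl _⟩
  rw [gronwallBound_ε0_δ0] at this
  have : f t1 = 0 := by
    have := norm_le_zero_iff.mp this
    exact this
  linarith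

/-- Proposition 1, subthreshold case: if `R_e = b * S 0 / c ≤ 1`, then `I` is
nonincreasing on `[0,∞)` and `I t → 0` as `t → ∞`. -/
theorem sir_subthreshold_informed_decreases
    (b c : ℝ) (hb : 0 < b) (hc : 0 < c) (S I R : ℝ → ℝ)
    (hS : ∀ t ≥ (0 : ℝ), HasDerivAt S (-(b * I t * S t)) t)
    (hI : ∀ t ≥ (0 : ℝ), HasDerivAt I (b * I t * S t - c * I t) t)
    (hR : ∀ t ≥ (0 : ℝ), HasDerivAt R (c * I t) t)
    (hS0 : 0 ≤ S 0) (hI0 : 0 ≤ I 0) (hR0 : 0 ≤ R 0)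
    (hRe : b * S 0 / c ≤ 1) :
    AntitoneOn I (Set.Ici (0 : ℝ)) ∧ Filter.Tendsto I Filter.atTop (nhds 0) := by
  have hbS0 : b * S 0 ≤ c := by
    rw [div_le_one hc] at hRe; exact hRe
  -- continuity
  have hScont : ContinuousOn S (Set.Ici 0) := fun x hx =>
    (hS x hx).continuousAt.continuousWithinAt
  have hIcont : ContinuousOn I (Set.Ici 0) := fun x hx =>
    (hI x hx).continuousAt.continuousWithinAt
  -- rearranged derivatives
  have hS' : ∀ t ≥ (0:ℝ), HasDerivAt S ((-(b * I t)) * S t) t := by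
    intro t ht
    have := hS t ht; convert this using 1; ring
  have hI' : ∀ t ≥ (0:ℝ), HasDerivAt I ((b * S t - c) * I t) t := by
    intro t ht
    have := hI t ht; convert this using 1; ring
  -- nonnegativity
  have hSpos : ∀ t ≥ (0:ℝ), 0 ≤ S t :=
    sir_aux_nonneg S (fun t => -(b * I t)) hS'
      ((continuousOn_const.mul hIcont).neg) hS0
  have hIpos : ∀ t ≥ (0:ℝ), 0 ≤ I t :=
    sir_aux_nonneg I (fun t => b * S t - c) hI'
      ((continuousOn_const.mul hScont).sub continuousOn_const) hI0
  -- S is antitone on [0,∞)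
  have hSanti : AntitoneOn S (Set.Ici 0) := by
    apply antitoneOn_of_hasDerivWithinAt_nonpos (convex_Ici 0) hScont
      (f' := fun t => (-(b * I t)) * S t)
    · intro x hx
      rw [interior_Ici] at hx
      exact (hS' x (le_of_lt hx)).hasDerivWithinAt
    · intro x hx
      rw [interior_Ici] at hx
      have h1 := hIpos x (le_of_lt hx)
      have h2 := hSpos x (le_of_lt hx)
      nlinarith [mul_nonneg (mul_nonneg hb.le h1) h2]
  have hSle : ∀ t ≥ (0:ℝ), S t ≤ S 0 := fun t ht => hSanti (Set.mem_Ici.mpr (le_refl 0)) ht ht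
  -- derivative of I is nonpositive on [0,∞)
  have hIderiv_nonpos : ∀ t ≥ (0:ℝ), (b * S t - c) * I t ≤ 0 := by
    intro t ht
    have h1 := hIpos t ht
    have h2 : b * S t ≤ c := by
      have := hSle t ht
      nlinarith [hb.le]
    nlinarith
  have hIanti : AntitoneOn I (Set.Ici 0) := by
    apply antitoneOn_of_hasDerivWithinAt_nonpos (convex_Ici 0) hIcont
      (f' := fun t => (b * S t - c) * I t)
    · intro x hx
      rw [interior_Ici] at hx
      exact (hI' x (le_of_lt hx)).hasDerivWithinAt
    · intro x hx
      rw [interior_Ici] at hx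
      exact hIderiv_nonpos x (le_of_lt hx)
  refine ⟨hIanti, ?_⟩
  -- dichotomy: either I gets below every ε, or it is bounded below by some ε > 0
  by_cases hsmall : ∀ ε > (0:ℝ), ∃ t ≥ (0:ℝ), I t < ε
  · -- then I → 0 by antitonicity
    rw [Metric.tendsto_atTop]
    intro ε hε
    obtain ⟨t0, ht0, hIt0⟩ := hsmall ε hε
    refine ⟨t0, fun t ht => ?_⟩
    have ht' : (0:ℝ) ≤ t := le_trans ht0 ht
    have h1 := hIpos t ht'
    have h2 : I t ≤ I t0 := hIanti ht0 ht' ht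
    rw [Real.dist_eq, sub_zero, abs_of_nonneg h1]
    linarith
  · -- otherwise I ≥ ε > 0 forever, contradiction
    exfalso
    push_neg at hsmall
    obtain ⟨ε, hε, hIge⟩ := hsmall
    -- S t ≤ S 0 * exp (-(b*ε) * t)
    have hφanti : AntitoneOn (fun t => S t * Real.exp (b * ε * t)) (Set.Ici 0) := by
      apply antitoneOn_of_hasDerivWithinAt_nonpos (convex_Ici 0)
        (hScont.mul (Real.continuous_exp.comp (continuous_const.mul continuous_id)).continuousOn)
        (f' := fun t => ((-(b * I t)) * S t) * Real.exp (b * ε * t)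
          + S t * (Real.exp (b * ε * t) * (b * ε)))
      · intro x hx
        rw [interior_Ici] at hx
        have hd : HasDerivAt (fun t => Real.exp (b * ε * t)) (Real.exp (b * ε * x) * (b * ε)) x := by
          simpa [mul_comm] using ((hasDerivAt_id x).const_mul (b * ε)).exp
        exact ((hS' x hx.le).mul hd).hasDerivWithinAt
      · intro x hx
        rw [interior_Ici] at hx
        have h1 := hIpos x hx.le
        have h2 := hSpos x hx.le
        have h3 := hIge x hx.le
        have h4 : (0:ℝ) < Real.exp (b * ε * x) := Real.exp_pos _
        have h5 : I x ≥ ε := h3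
        have h6 : 0 ≤ b * (S x * (I x - ε)) :=
          mul_nonneg hb.le (mul_nonneg h2 (sub_nonneg.mpr h5))
        have : (-(b * I x)) * S x + S x * (b * ε) ≤ 0 := by nlinarith
        nlinarith
    have hSexp : ∀ t ≥ (0:ℝ), S t ≤ S 0 * Real.exp (-(b * ε * t)) := by
      intro t ht
      have := hφanti (Set.mem_Ici.mpr (le_refl 0)) ht ht
      simp only [mul_zero, Real.exp_zero, mul_one] at this
      have h4 : (0:ℝ) < Real.exp (b * ε * t) := Real.exp_pos _
      rw [Real.exp_neg, mul_comm (S 0), ← div_eq_inv_mul, le_div_iff₀ h4]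
      exact this
    -- S → 0, so eventually b * S t ≤ c / 2
    have hStend : Filter.Tendsto S Filter.atTop (nhds 0) := by
      have hupper : Filter.Tendsto (fun t => S 0 * Real.exp (-(b * ε * t)))
          Filter.atTop (nhds 0) := by
        have h1 : Filter.Tendsto (fun t : ℝ => -(b * ε * t)) Filter.atTop Filter.atBot := by
          apply Filter.tendsto_neg_atBot_iff.mpr
          exact Filter.Tendsto.const_mul_atTop (by positivity) Filter.tendsto_id
        simpa using (Real.tendsto_exp_atBot.comp h1).const_mul (S 0)
      apply tendsto_of_tendsto_of_tendsto_of_le_of_le'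
        (tendsto_const_nhds : Filter.Tendsto (fun _ : ℝ => (0:ℝ)) Filter.atTop (nhds 0))
        hupper
      · filter_upwards [Filter.eventually_ge_atTop (0:ℝ)] with t ht
        exact hSpos t ht
      · filter_upwards [Filter.eventually_ge_atTop (0:ℝ)] with t ht
        exact hSexp t ht
    have hevent : ∀ᶠ t in Filter.atTop, b * S t < c / 2 := by
      have : ∀ᶠ t in Filter.atTop, S t < c / (2 * b) := by
        have := hStend.eventually (eventually_lt_nhds (by positivity : (0:ℝ) < c / (2 * b)))
        simpa using this
      filter_upwards [this] with t ht
      rw [lt_div_iff₀ (by positivity)] at ht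
      nlinarith
    obtain ⟨T, hT⟩ := (hevent.and (Filter.eventually_ge_atTop (0:ℝ))).exists_forall_of_atTop
    have hT0 : (0:ℝ) ≤ T := (hT T (le_refl T)).2
    -- on [T,∞), I t + (c*ε/2) * t is antitone
    have hψanti : AntitoneOn (fun t => I t + (c * ε / 2) * t) (Set.Ici T) := by
      apply antitoneOn_of_hasDerivWithinAt_nonpos (convex_Ici T)
        ((hIcont.mono (Set.Ici_subset_Ici.mpr hT0)).add
          (continuousOn_const.mul continuousOn_id))
        (f' := fun t => (b * S t - c) * I t + c * ε / 2)
      · intro x hx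
        rw [interior_Ici] at hx
        have hx0 : (0:ℝ) ≤ x := le_trans hT0 hx.le
        have hd : HasDerivAt (fun t => I t + (c * ε / 2) * t)
            ((b * S x - c) * I x + c * ε / 2) x := by
          have h := (hI' x hx0).add ((hasDerivAt_id x).const_mul (c * ε / 2))
          rw [mul_one] at h
          exact h
        exact hd.hasDerivWithinAt
      · intro x hx
        rw [interior_Ici] at hx
        have hx0 : (0:ℝ) ≤ x := le_trans hT0 hx.le
        have h1 := hIge x hx0
        have h2 := (hT x hx.le).1
        have h3 : b * S x - c < -(c/2) := by linarith
        have h4 : (b * S x - c) * I x ≤ (b * S x - c) * ε := by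
          apply mul_le_mul_of_nonpos_left h1 (by linarith)
        nlinarith
    -- leads to I t → -∞, contradiction
    set t1 := T + (I T + 1) / (c * ε / 2) with ht1def
    have hcε : (0:ℝ) < c * ε / 2 := by positivity
    have hIT : (0:ℝ) ≤ I T := hIpos T hT0
    have ht1T : T ≤ t1 := by
      rw [ht1def]
      have : (0:ℝ) ≤ (I T + 1) / (c * ε / 2) := by positivity
      linarith
    have := hψanti (Set.self_mem_Ici) ht1T ht1T
    simp only at this
    have hI1 : I t1 ≥ ε := hIge t1 (le_trans hT0 ht1T)
    have hexpand : (c * ε / 2) * t1 = (c * ε / 2) * T + (I T + 1) := by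
      rw [ht1def, mul_add, mul_div_cancel₀ _ (ne_of_gt hcε)]
    nlinarith
end

section
/- Exponential decay bound for the informed compartment: if S(0) ≥ 0 and I(0) ≥ 0, then for all t ≥ 0, I(t) ≤ I(0)·exp((b·S(0) - c)·t). -/
open Set MeasureTheory

lemma sir_exp_rep (h y : ℝ → ℝ) (hcont : ContinuousOn h (Ici 0))
    (hy : ∀ t ≥ (0 : ℝ), HasDerivAt y (h t * y t) t) :
    ∀ t ≥ (0 : ℝ), y t = y 0 * Real.exp (∫ s in (0:ℝ)..t, h s) := by
  intro T hT
  set F : ℝ → ℝ := fun u => ∫ s in (0:ℝ)..u, h s with hFdef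
  have hintT : IntervalIntegrable h volume 0 T := by
    apply ContinuousOn.intervalIntegrable
    rw [uIcc_of_le hT]
    exact hcont.mono Icc_subset_Ici_self
  have hFderiv : ∀ x ∈ Ico (0:ℝ) T, HasDerivWithinAt F (h x) (Ici x) x := by
    intro x hx
    have hint : IntervalIntegrable h volume 0 x := by
      apply ContinuousOn.intervalIntegrable
      rw [uIcc_of_le hx.1]
      exact hcont.mono Icc_subset_Ici_self
    have hsub : Ioi x ⊆ Ici (0:ℝ) := fun a ha => le_of_lt (lt_of_le_of_lt hx.1 ha)
    have hmeas : StronglyMeasurableAtFilter h (nhdsWithin x (Ioi x)) :=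
      ⟨Ioi x, self_mem_nhdsWithin,
        ((hcont.mono hsub).aestronglyMeasurable measurableSet_Ioi)⟩
    have hcx : ContinuousWithinAt h (Ioi x) x :=
      (hcont x hx.1).mono hsub
    exact intervalIntegral.integral_hasDerivWithinAt_right hint hmeas hcx
  have hFcont : ContinuousOn F (Icc 0 T) := by
    have := intervalIntegral.continuousOn_primitive_interval' hintT (left_mem_uIcc)
    rwa [uIcc_of_le hT] at this
  have hycont : ContinuousOn y (Icc 0 T) := fun x hx =>
    ((hy x hx.1).continuousAt).continuousWithinAt
  set g : ℝ → ℝ := fun u => y u * Real.exp (-F u) with hgdef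
  have hgcont : ContinuousOn g (Icc 0 T) :=
    hycont.mul (Real.continuous_exp.comp_continuousOn hFcont.neg)
  have hgderiv : ∀ x ∈ Ico (0:ℝ) T, HasDerivWithinAt g 0 (Ici x) x := by
    intro x hx
    have h1 : HasDerivWithinAt y (h x * y x) (Ici x) x :=
      (hy x hx.1).hasDerivWithinAt
    have h2 : HasDerivWithinAt (fun u => Real.exp (-F u)) (-h x * Real.exp (-F x)) (Ici x) x := by
      have := (((hFderiv x hx).neg).exp)
      exact this.congr_deriv (mul_comm _ _)
    have := h1.mul h2
    exact this.congr_deriv (by ring)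
  have key := constant_of_has_deriv_right_zero hgcont hgderiv T ⟨hT, le_rfl⟩
  have hF0 : F 0 = 0 := by simp [hFdef]
  have hg0 : g 0 = y 0 := by simp [hgdef, hF0]
  have : y T * Real.exp (-F T) = y 0 := by rw [← hg0]; exact key
  have hpos : Real.exp (-F T) ≠ 0 := (Real.exp_pos _).ne'
  field_simp [Real.exp_neg] at this ⊢
  rw [← this, mul_assoc, ← Real.exp_add]; simp [hFdef]

/-- Exponential decay bound for the informed compartment:
`I t ≤ I 0 * exp ((b * S 0 - c) * t)` for all `t ≥ 0`. -/
theorem sir_informed_exponential_bound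
    (b c : ℝ) (hb : 0 < b) (hc : 0 < c) (S I R : ℝ → ℝ)
    (hS : ∀ t ≥ (0 : ℝ), HasDerivAt S (-(b * I t * S t)) t)
    (hI : ∀ t ≥ (0 : ℝ), HasDerivAt I (b * I t * S t - c * I t) t)
    (hR : ∀ t ≥ (0 : ℝ), HasDerivAt R (c * I t) t)
    (hS0 : 0 ≤ S 0) (hI0 : 0 ≤ I 0) :
    ∀ t ≥ (0 : ℝ), I t ≤ I 0 * Real.exp ((b * S 0 - c) * t) := by
  have hScont : ContinuousOn S (Ici 0) := fun x hx =>
    ((hS x hx).continuousAt).continuousWithinAt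
  have hIcont : ContinuousOn I (Ici 0) := fun x hx =>
    ((hI x hx).continuousAt).continuousWithinAt
  have hIrep := sir_exp_rep (fun s => b * S s - c) I
    (((continuousOn_const.mul hScont).sub continuousOn_const))
    (fun t ht => by have := hI t ht; convert this using 1; ring)
  have hSrep := sir_exp_rep (fun s => -(b * I s)) S
    ((continuousOn_const.mul hIcont).neg)
    (fun t ht => by have := hS t ht; convert this using 1; ring)
  have hInn : ∀ u ≥ (0:ℝ), 0 ≤ I u := fun u hu => by
    rw [hIrep u hu]; exact mul_nonneg hI0 (Real.exp_pos _).le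
  have hSle : ∀ u ≥ (0:ℝ), S u ≤ S 0 := by
    intro u hu
    rw [hSrep u hu]
    have hint : (∫ s in (0:ℝ)..u, -(b * I s)) ≤ 0 := by
      rw [intervalIntegral.integral_neg]
      simp only [neg_nonpos]
      exact intervalIntegral.integral_nonneg hu
        (fun s hs => mul_nonneg hb.le (hInn s hs.1))
    calc S 0 * Real.exp (∫ s in (0:ℝ)..u, -(b * I s)) ≤ S 0 * 1 :=
          mul_le_mul_of_nonneg_left (Real.exp_le_one_iff.2 hint) hS0
      _ = S 0 := mul_one _
  intro t ht
  rw [hIrep t ht]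
  have hmono : (∫ s in (0:ℝ)..t, (b * S s - c)) ≤ (b * S 0 - c) * t := by
    have h2 : (∫ s in (0:ℝ)..t, (b * S 0 - c)) = (b * S 0 - c) * t := by
      simp; ring
    rw [← h2]
    apply intervalIntegral.integral_mono_on ht
    · apply ContinuousOn.intervalIntegrable
      rw [uIcc_of_le ht]
      exact ((continuousOn_const.mul hScont).sub continuousOn_const).mono Icc_subset_Ici_self
    · exact intervalIntegrable_const
    · intro s hs
      have := hSle s hs.1
      nlinarith
  exact mul_le_mul_of_nonneg_left (Real.exp_le_exp.2 hmono) hI0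
end

section
/- Maximum number of informed nodes: if S(t) > 0 for all t ≥ 0, and at some time t* ≥ 0 one has I'(t*) = 0 and I(t*) > 0, then I(t*) = I(0) + S(0) - (c/b)·ln(S(0)) - (c/b)·(1 - ln(c/b)). -/
/-- Maximum number of informed nodes: at a critical point `t*` of `I` with
`I t* > 0`, one has
`I t* = I 0 + S 0 - (c/b) * ln (S 0) - (c/b) * (1 - ln (c/b))`. -/
theorem sir_informed_maximum_value
    (b c : ℝ) (hb : 0 < b) (hc : 0 < c) (S I R : ℝ → ℝ)
    (hS : ∀ t ≥ (0 : ℝ), HasDerivAt S (-(b * I t * S t)) t)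
    (hI : ∀ t ≥ (0 : ℝ), HasDerivAt I (b * I t * S t - c * I t) t)
    (hR : ∀ t ≥ (0 : ℝ), HasDerivAt R (c * I t) t)
    (hSpos : ∀ t ≥ (0 : ℝ), 0 < S t)
    (ts : ℝ) (hts : 0 ≤ ts) (hcrit : deriv I ts = 0) (hIpos : 0 < I ts) :
    I ts = I 0 + S 0 - c / b * Real.log (S 0) - c / b * (1 - Real.log (c / b)) := by
  set F : ℝ → ℝ := fun t => I t + S t - c / b * Real.log (S t) with hFdef
  have hF : ∀ t ≥ (0 : ℝ), HasDerivAt F 0 t := by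
    intro t ht
    have hSne : S t ≠ 0 := (hSpos t ht).ne'
    have hlog : HasDerivAt (fun u => Real.log (S u)) (-(b * I t * S t) / S t) t :=
      (hS t ht).log hSne
    have h := ((hI t ht).add (hS t ht)).sub (hlog.const_mul (c / b))
    convert h using 1
    case e'_4 => rfl
    case e'_5 => rfl
    case e'_8 => rfl
    field_simp
    ring
  -- F is constant on [0, ∞)
  have hconst : F ts = F 0 := by
    have := constant_of_has_deriv_right_zero
      (f := F) (a := 0) (b := ts)
      (fun x hx => ((hF x hx.1).continuousAt).continuousWithinAt)
      (fun x hx => (hF x hx.1).hasDerivWithinAt)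
    exact this ts ⟨hts, le_refl ts⟩
  -- at the critical point, S ts = c / b
  have hderiv : b * I ts * S ts - c * I ts = 0 := by
    rw [← (hI ts hts).deriv]; exact hcrit
  have hSts : S ts = c / b := by
    have h1 : I ts * (b * S ts - c) = 0 := by ring_nf; linarith [hderiv]
    have h2 : b * S ts - c = 0 := by
      rcases mul_eq_zero.mp h1 with h | h
      · exact absurd h hIpos.ne'
      · exact h
    field_simp
    linarith
  have hF0 : I ts + S ts - c / b * Real.log (S ts) =
      I 0 + S 0 - c / b * Real.log (S 0) := hconst
  rw [hSts] at hF0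
  have hlogcb : Real.log (c / b) = Real.log (c / b) := rfl
  have hcb : (0 : ℝ) < c / b := div_pos hc hb
  nlinarith [hF0]
end

section
/- Proposition 2 (persistence of susceptible nodes): if S(0) > 0, I(0) ≥ 0, and R(0) ≥ 0, then with N = S(0) + I(0) + R(0), one has S(t) ≥ S(0)·exp(-b·N/c) > 0 for all t ≥ 0; in particular the limit S(∞) = lim_{t→∞} S(t) satisfies S(∞) ≥ S(0)·exp(-b·N/c) > 0. -/
open Set Filter intervalIntegral

/-- Solution formula for a scalar linear ODE `f' = a f` on `[0, t]` with continuous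
coefficient `a` (derivative at `0` only required within `Ici 0`). -/
lemma sir_exp_sol (a f : ℝ → ℝ) (ha : Continuous a)
    (hf : ∀ t > (0 : ℝ), HasDerivAt f (a t * f t) t)
    (h0 : HasDerivWithinAt f (a 0 * f 0) (Set.Ici 0) 0)
    {t : ℝ} (ht : 0 ≤ t) :
    f t = f 0 * Real.exp (∫ s in (0:ℝ)..t, a s) := by
  set A : ℝ → ℝ := fun u => ∫ s in (0:ℝ)..u, a s with hAdef
  have hAderiv : ∀ u : ℝ, HasDerivAt A (a u) u := fun u =>
    intervalIntegral.integral_hasDerivAt_right (ha.intervalIntegrable _ _)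
      (ha.stronglyMeasurableAtFilter _ _) ha.continuousAt
  have hAcont : Continuous A :=
    continuous_iff_continuousAt.2 fun u => (hAderiv u).continuousAt
  have hfd : ∀ x ∈ Set.Ico (0:ℝ) t, HasDerivWithinAt f (a x * f x) (Set.Ici x) x := by
    intro x hx
    rcases hx.1.eq_or_lt with h | h
    · subst h; exact h0
    · exact (hf x h).hasDerivWithinAt
  have hgd : ∀ x ∈ Set.Ico (0:ℝ) t,
      HasDerivWithinAt (fun u => f u * Real.exp (-A u)) 0 (Set.Ici x) x := by
    intro x hx
    have hE : HasDerivAt (fun u => Real.exp (-A u)) (Real.exp (-A x) * (-(a x))) x :=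
      ((hAderiv x).neg).exp
    have hprod := (hfd x hx).mul hE.hasDerivWithinAt
    convert hprod using 1
    all_goals first | rfl | ring
  have hfc : ContinuousOn f (Set.Icc 0 t) := by
    intro x hx
    rcases hx.1.eq_or_lt with h | h
    · subst h
      exact h0.continuousWithinAt.mono Set.Icc_subset_Ici_self
    · exact (hf x h).continuousAt.continuousWithinAt
  have hgc : ContinuousOn (fun u => f u * Real.exp (-A u)) (Set.Icc 0 t) :=
    hfc.mul ((Real.continuous_exp.comp hAcont.neg)).continuousOn
  have hconst := constant_of_has_deriv_right_zero hgc hgd t (Set.right_mem_Icc.2 ht)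
  have hA0 : A 0 = 0 := intervalIntegral.integral_same
  have heq : f t * Real.exp (-A t) = f 0 := by
    simpa [hA0] using hconst
  have := congrArg (· * Real.exp (A t)) heq
  simpa [mul_assoc, ← Real.exp_add] using this

/-- Proposition 2 (persistence of susceptible nodes): with
`N = S 0 + I 0 + R 0`, one has `S t ≥ S 0 * exp (-(b * N / c)) > 0` for all
`t ≥ 0`; in particular the limit `S ∞` satisfies the same lower bound. -/
theorem sir_susceptible_persistence
    (b c : ℝ) (hb : 0 < b) (hc : 0 < c) (S I R : ℝ → ℝ)
    (hS : ∀ t ≥ (0 : ℝ), HasDerivAt S (-(b * I t * S t)) t)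
    (hI : ∀ t ≥ (0 : ℝ), HasDerivAt I (b * I t * S t - c * I t) t)
    (hR : ∀ t ≥ (0 : ℝ), HasDerivAt R (c * I t) t)
    (hS0 : 0 < S 0) (hI0 : 0 ≤ I 0) (hR0 : 0 ≤ R 0) :
    (∀ t ≥ (0 : ℝ), S 0 * Real.exp (-(b * (S 0 + I 0 + R 0) / c)) ≤ S t) ∧
    0 < S 0 * Real.exp (-(b * (S 0 + I 0 + R 0) / c)) ∧
    ∃ Sinf : ℝ, Filter.Tendsto S Filter.atTop (nhds Sinf) ∧
      S 0 * Real.exp (-(b * (S 0 + I 0 + R 0) / c)) ≤ Sinf := by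
  set N : ℝ := S 0 + I 0 + R 0 with hNdef
  set Sh : ℝ → ℝ := fun u => S (max u 0) with hShdef
  set Ih : ℝ → ℝ := fun u => I (max u 0) with hIhdef
  set Rh : ℝ → ℝ := fun u => R (max u 0) with hRhdef
  have hSh_eq : ∀ u ≥ (0:ℝ), Sh u = S u := fun u hu => by
    simp [hShdef, max_eq_left hu]
  have hIh_eq : ∀ u ≥ (0:ℝ), Ih u = I u := fun u hu => by
    simp [hIhdef, max_eq_left hu]
  have hRh_eq : ∀ u ≥ (0:ℝ), Rh u = R u := fun u hu => by
    simp [hRhdef, max_eq_left hu]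
  have hmaxc : Continuous (fun u : ℝ => max u 0) := continuous_id.max continuous_const
  have hShc : Continuous Sh := continuous_iff_continuousAt.2 fun x =>
    ContinuousAt.comp (g := S) (f := fun u : ℝ => max u 0)
      ((hS _ (le_max_right x 0)).continuousAt) hmaxc.continuousAt
  have hIhc : Continuous Ih := continuous_iff_continuousAt.2 fun x =>
    ContinuousAt.comp (g := I) (f := fun u : ℝ => max u 0)
      ((hI _ (le_max_right x 0)).continuousAt) hmaxc.continuousAt
  have hRhc : Continuous Rh := continuous_iff_continuousAt.2 fun x =>
    ContinuousAt.comp (g := R) (f := fun u : ℝ => max u 0)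
      ((hR _ (le_max_right x 0)).continuousAt) hmaxc.continuousAt
  have hev : ∀ {t : ℝ}, 0 < t → ∀ f : ℝ → ℝ, (fun u => f (max u 0)) =ᶠ[nhds t] f := by
    intro t ht f
    filter_upwards [Ioi_mem_nhds ht] with u hu
    rw [max_eq_left (le_of_lt hu)]
  -- derivatives of the hatted functions
  have hSh' : ∀ t > (0:ℝ), HasDerivAt Sh (-(b * Ih t) * Sh t) t := by
    intro t ht
    have h1 : HasDerivAt Sh (-(b * I t * S t)) t :=
      (hS t ht.le).congr_of_eventuallyEq (hev ht S)
    convert h1 using 1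
    rw [hSh_eq t ht.le, hIh_eq t ht.le]; ring
  have hIh' : ∀ t > (0:ℝ), HasDerivAt Ih ((b * Sh t - c) * Ih t) t := by
    intro t ht
    have h1 : HasDerivAt Ih (b * I t * S t - c * I t) t :=
      (hI t ht.le).congr_of_eventuallyEq (hev ht I)
    convert h1 using 1
    rw [hSh_eq t ht.le, hIh_eq t ht.le]; ring
  have hRh' : ∀ t > (0:ℝ), HasDerivAt Rh (c * Ih t) t := by
    intro t ht
    have h1 : HasDerivAt Rh (c * I t) t :=
      (hR t ht.le).congr_of_eventuallyEq (hev ht R)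
    convert h1 using 1
    rw [hIh_eq t ht.le]
  have hSh0v : Sh 0 = S 0 := hSh_eq 0 le_rfl
  have hIh0v : Ih 0 = I 0 := hIh_eq 0 le_rfl
  have hRh0v : Rh 0 = R 0 := hRh_eq 0 le_rfl
  have hSh0 : HasDerivWithinAt Sh (-(b * Ih 0) * Sh 0) (Set.Ici 0) 0 := by
    have h1 : HasDerivWithinAt Sh (-(b * I 0 * S 0)) (Set.Ici 0) 0 :=
      ((hS 0 le_rfl).hasDerivWithinAt).congr (fun u hu => hSh_eq u hu) hSh0v
    convert h1 using 1
    rw [hSh0v, hIh0v]; ring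
  have hIh0 : HasDerivWithinAt Ih ((b * Sh 0 - c) * Ih 0) (Set.Ici 0) 0 := by
    have h1 : HasDerivWithinAt Ih (b * I 0 * S 0 - c * I 0) (Set.Ici 0) 0 :=
      ((hI 0 le_rfl).hasDerivWithinAt).congr (fun u hu => hIh_eq u hu) hIh0v
    convert h1 using 1
    rw [hSh0v, hIh0v]; ring
  have hRh0 : HasDerivWithinAt Rh (c * Ih 0) (Set.Ici 0) 0 := by
    have h1 : HasDerivWithinAt Rh (c * I 0) (Set.Ici 0) 0 :=
      ((hR 0 le_rfl).hasDerivWithinAt).congr (fun u hu => hRh_eq u hu) hRh0v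
    convert h1 using 1
    rw [hIh0v]
  -- solution formulas
  have hIsol : ∀ t ≥ (0:ℝ), Ih t = I 0 * Real.exp (∫ s in (0:ℝ)..t, (b * Sh s - c)) := by
    intro t ht
    have := sir_exp_sol (fun u => b * Sh u - c) Ih
      ((continuous_const.mul hShc).sub continuous_const) hIh' hIh0 ht
    rwa [hIh0v] at this
  have hIpos : ∀ t ≥ (0:ℝ), 0 ≤ Ih t := by
    intro t ht
    rw [hIsol t ht]
    exact mul_nonneg hI0 (Real.exp_pos _).le
  have hSsol : ∀ t ≥ (0:ℝ), Sh t = S 0 * Real.exp (∫ s in (0:ℝ)..t, -(b * Ih s)) := by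
    intro t ht
    have := sir_exp_sol (fun u => -(b * Ih u)) Sh
      ((continuous_const.mul hIhc).neg) hSh' hSh0 ht
    rwa [hSh0v] at this
  have hShpos : ∀ t : ℝ, 0 < Sh t := by
    intro t
    have h1 : Sh t = Sh (max t 0) := by
      simp [hShdef, max_eq_left (le_max_right t 0)]
    rw [h1, hSsol (max t 0) (le_max_right t 0)]
    exact mul_pos hS0 (Real.exp_pos _)
  -- conservation of total population
  have hWconst : ∀ t ≥ (0:ℝ), Sh t + Ih t + Rh t = N := by
    intro t ht
    have hWc : ContinuousOn (fun u => Sh u + Ih u + Rh u) (Set.Icc 0 t) :=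
      ((hShc.add hIhc).add hRhc).continuousOn
    have hWd : ∀ x ∈ Set.Ico (0:ℝ) t,
        HasDerivWithinAt (fun u => Sh u + Ih u + Rh u) 0 (Set.Ici x) x := by
      intro x hx
      rcases hx.1.eq_or_lt with h | h
      · subst h
        have hsum := (hSh0.add hIh0).add hRh0
        convert hsum using 1
        all_goals first | rfl | ring
      · have hsum := (((hSh' x h).add (hIh' x h)).add (hRh' x h)).hasDerivWithinAt
          (s := Set.Ici x)
        convert hsum using 1
        all_goals first | rfl | ring
    have := constant_of_has_deriv_right_zero hWc hWd t (Set.right_mem_Icc.2 ht)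
    rw [this, hSh0v, hIh0v, hRh0v]
  have hNnn : 0 ≤ N := by
    rw [hNdef]
    have := add_nonneg (add_nonneg hS0.le hI0) hR0
    linarith
  -- FTC for Rh
  have hRint : ∀ x y : ℝ, 0 ≤ x → x ≤ y → (∫ s in x..y, c * Ih s) = Rh y - Rh x := by
    intro x y hx hxy
    exact intervalIntegral.integral_eq_sub_of_hasDeriv_right_of_le hxy hRhc.continuousOn
      (fun u hu => ((hRh' u (lt_of_le_of_lt hx hu.1)).hasDerivWithinAt))
      ((continuous_const.mul hIhc).intervalIntegrable _ _)
  have hfun : ∀ s : ℝ, -(b * Ih s) = -(b/c) * (c * Ih s) := by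
    intro s
    rw [neg_mul, ← mul_assoc, div_mul_cancel₀ b hc.ne']
  have hEeq : ∀ t ≥ (0:ℝ), (∫ s in (0:ℝ)..t, -(b * Ih s)) = -(b/c) * (Rh t - Rh 0) := by
    intro t ht
    rw [← hRint 0 t le_rfl ht, ← intervalIntegral.integral_const_mul]
    exact intervalIntegral.integral_congr fun s _ => hfun s
  -- the key lower bound
  have key : ∀ t ≥ (0:ℝ), S 0 * Real.exp (-(b * N / c)) ≤ Sh t := by
    intro t ht
    rw [hSsol t ht]
    apply mul_le_mul_of_nonneg_left _ hS0.le
    apply Real.exp_le_exp.2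
    rw [hEeq t ht]
    have hRle : Rh t - Rh 0 ≤ N := by
      have h1 := hWconst t ht
      have h2 := (hShpos t).le
      have h3 := hIpos t ht
      have h4 : 0 ≤ Rh 0 := by rw [hRh0v]; exact hR0
      linarith
    have hbc : 0 ≤ b / c := div_nonneg hb.le hc.le
    have : -(b/c) * N ≤ -(b/c) * (Rh t - Rh 0) := by nlinarith
    calc -(b * N / c) = -(b/c) * N := by ring
      _ ≤ -(b/c) * (Rh t - Rh 0) := this
  -- antitonicity of Sh
  have step : ∀ x y : ℝ, 0 ≤ x → x ≤ y → Sh y ≤ Sh x := by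
    intro x y hx hxy
    rw [hSsol x hx, hSsol y (hx.trans hxy)]
    apply mul_le_mul_of_nonneg_left _ hS0.le
    apply Real.exp_le_exp.2
    have hadd := intervalIntegral.integral_add_adjacent_intervals (μ := MeasureTheory.volume)
      (f := fun s : ℝ => -(b * Ih s))
      (((continuous_const.mul hIhc).neg).intervalIntegrable 0 x)
      (((continuous_const.mul hIhc).neg).intervalIntegrable x y)
    rw [← hadd]
    have hle : (∫ s in x..y, -(b * Ih s)) ≤ 0 := by
      rw [intervalIntegral.integral_neg, neg_nonpos]
      apply intervalIntegral.integral_nonneg hxy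
      intro u hu
      exact mul_nonneg hb.le (hIpos u (hx.trans hu.1))
    linarith
  have hmono : Antitone Sh := by
    intro x y hxy
    rcases le_total y 0 with hy | hy
    · have h1 : Sh x = S 0 := by simp [hShdef, max_eq_right (hxy.trans hy)]
      have h2 : Sh y = S 0 := by simp [hShdef, max_eq_right hy]
      rw [h1, h2]
    · rcases le_total x 0 with hx | hx
      · have h1 : Sh x = Sh 0 := by simp [hShdef, max_eq_right hx]
        rw [h1]
        exact step 0 y le_rfl hy
      · exact step x y hx hxy
  -- global lower bound for Sh
  have hm_le : ∀ u : ℝ, S 0 * Real.exp (-(b * N / c)) ≤ Sh u := by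
    intro u
    rcases le_total u 0 with h | h
    · have h1 : Sh u = S 0 := by simp [hShdef, max_eq_right h]
      rw [h1]
      have hexp : Real.exp (-(b * N / c)) ≤ 1 := by
        have h2 : Real.exp (-(b * N / c)) ≤ Real.exp 0 :=
          Real.exp_le_exp.2 (neg_nonpos_of_nonneg
            (div_nonneg (mul_nonneg hb.le hNnn) hc.le))
        simpa using h2
      nlinarith
    · exact key u h
  have hbdd : BddBelow (Set.range Sh) := by
    refine ⟨S 0 * Real.exp (-(b * N / c)), ?_⟩
    rintro v ⟨u, rfl⟩
    exact hm_le u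
  have htend : Tendsto Sh atTop (nhds (⨅ u, Sh u)) := tendsto_atTop_ciInf hmono hbdd
  refine ⟨fun t ht => by rw [← hSh_eq t ht]; exact key t ht,
    mul_pos hS0 (Real.exp_pos _), ⟨⨅ u, Sh u, ?_, le_ciInf hm_le⟩⟩
  apply Filter.Tendsto.congr' _ htend
  filter_upwards [eventually_ge_atTop (0:ℝ)] with u hu
  exact hSh_eq u hu
end

section
/- Subthreshold decay in the SIR model with natural death rates (Situations 1 and 3): if S(0) ≥ 0, I(0) ≥ 0, and b·S(0) ≤ c + m', then I is nonincreasing on [0,∞). -/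
open Set MeasureTheory intervalIntegral

/-- Nonnegativity is preserved by a linear ODE `f' = a·f` with continuous
coefficient on `[0,∞)`. -/
lemma ode_nonneg_aux (a f : ℝ → ℝ) (ha : ContinuousOn a (Set.Ici (0:ℝ)))
    (hf : ∀ t ≥ (0:ℝ), HasDerivAt f (a t * f t) t) (h0 : 0 ≤ f 0) :
    ∀ t ≥ (0:ℝ), 0 ≤ f t := by
  intro T hT
  set A : ℝ → ℝ := fun t => ∫ s in (0:ℝ)..t, a s with hAdef
  have hAint : ∀ x : ℝ, 0 ≤ x → IntervalIntegrable a volume 0 x := by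
    intro x hx
    apply ContinuousOn.intervalIntegrable
    apply ha.mono
    rw [Set.uIcc_of_le hx]
    exact fun y hy => hy.1
  have hA : ∀ x ∈ Set.Ici (0:ℝ), HasDerivWithinAt A (a x) (Set.Ici x) x := by
    intro x hx
    have hmeas : StronglyMeasurableAtFilter a (nhdsWithin x (Set.Ioi x)) volume := by
      refine ⟨Set.Ici 0, ?_, ha.aestronglyMeasurable measurableSet_Ici⟩
      exact Filter.mem_of_superset self_mem_nhdsWithin
        ((Set.Ioi_subset_Ici_self).trans (Set.Ici_subset_Ici.2 hx))
    exact integral_hasDerivWithinAt_right (hAint x hx) hmeas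
      (((ha x hx).mono (Set.Ici_subset_Ici.2 hx)).mono Set.Ioi_subset_Ici_self)
  have hAcont : ContinuousOn A (Set.Icc 0 T) := by
    have := continuousOn_primitive_interval' (μ := volume) (hAint T hT)
      (by rw [Set.uIcc_of_le hT]; exact Set.left_mem_Icc.2 hT)
    rwa [Set.uIcc_of_le hT] at this
  set g : ℝ → ℝ := fun t => f t * Real.exp (-A t) with hgdef
  have hfcont : ContinuousOn f (Set.Icc 0 T) :=
    fun x hx => ((hf x hx.1).continuousAt).continuousWithinAt
  have hgcont : ContinuousOn g (Set.Icc 0 T) :=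
    hfcont.mul ((hAcont.neg).rexp)
  have hgderiv : ∀ x ∈ Set.Ico (0:ℝ) T, HasDerivWithinAt g 0 (Set.Ici x) x := by
    intro x hx
    have h1 : HasDerivWithinAt (fun t => Real.exp (-A t)) (Real.exp (-A x) * (-a x))
        (Set.Ici x) x := ((hA x hx.1).neg).exp
    have h2 := ((hf x hx.1).hasDerivWithinAt (s := Set.Ici x)).mul h1
    exact h2.congr_deriv (by ring)
  have key := constant_of_has_deriv_right_zero hgcont hgderiv T (Set.right_mem_Icc.2 hT)
  have hA0 : A 0 = 0 := by simp [hAdef]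
  have hg0 : g 0 = f 0 := by simp [hgdef, hA0]
  have hgT : 0 ≤ f T * Real.exp (-A T) := by
    have : 0 ≤ g T := by rw [key, hg0]; exact h0
    simpa [hgdef] using this
  have hexp : 0 < Real.exp (-A T) := Real.exp_pos _
  nlinarith [hgT, hexp]

/-- Subthreshold decay in the SIR model with natural death rates (Situations 1
and 3): if `b * S 0 ≤ c + m'`, then `I` is nonincreasing on `[0,∞)`. -/
theorem sir_death_situations13_subthreshold_informed_decreases
    (b c m m' : ℝ) (hb : 0 < b) (hc : 0 < c) (hm : 0 ≤ m) (hm' : 0 ≤ m')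
    (S I R : ℝ → ℝ)
    (hS : ∀ t ≥ (0 : ℝ), HasDerivAt S (-(b * I t * S t) - m * S t) t)
    (hI : ∀ t ≥ (0 : ℝ), HasDerivAt I (b * I t * S t - c * I t - m' * I t) t)
    (hR : ∀ t ≥ (0 : ℝ), HasDerivAt R (c * I t - m * R t) t)
    (hS0 : 0 ≤ S 0) (hI0 : 0 ≤ I 0) (hsub : b * S 0 ≤ c + m') :
    AntitoneOn I (Set.Ici (0 : ℝ)) := by
  have hScont : ContinuousOn S (Set.Ici (0:ℝ)) :=
    fun x hx => ((hS x hx).continuousAt).continuousWithinAt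
  have hIcont : ContinuousOn I (Set.Ici (0:ℝ)) :=
    fun x hx => ((hI x hx).continuousAt).continuousWithinAt
  -- I is nonnegative
  have hInn : ∀ t ≥ (0:ℝ), 0 ≤ I t := by
    apply ode_nonneg_aux (fun t => b * S t - c - m') I
    · exact ((continuousOn_const.mul hScont).sub continuousOn_const).sub continuousOn_const
    · intro t ht
      convert hI t ht using 1
      ring
    · exact hI0
  -- S is nonnegative
  have hSnn : ∀ t ≥ (0:ℝ), 0 ≤ S t := by
    apply ode_nonneg_aux (fun t => -(b * I t) - m) S
    · exact ((continuousOn_const.mul hIcont).neg).sub continuousOn_const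
    · intro t ht
      convert hS t ht using 1
      ring
    · exact hS0
  -- S is antitone on Ici 0
  have hSanti : AntitoneOn S (Set.Ici (0:ℝ)) := by
    apply AntitoneOn.mono (s := Set.Ici (0:ℝ)) ?_ (le_refl _)
    apply antitoneOn_of_deriv_nonpos (convex_Ici 0) hScont
    · intro x hx
      rw [interior_Ici] at hx
      exact ((hS x (le_of_lt hx)).differentiableAt).differentiableWithinAt
    · intro x hx
      rw [interior_Ici] at hx
      rw [(hS x (le_of_lt hx)).deriv]
      have h1 := hInn x (le_of_lt hx)
      have h2 := hSnn x (le_of_lt hx)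
      nlinarith [mul_nonneg (mul_nonneg hb.le h1) h2, mul_nonneg hm h2]
  -- deriv of I is nonpositive on Ioi 0
  apply antitoneOn_of_deriv_nonpos (convex_Ici 0) hIcont
  · intro x hx
    rw [interior_Ici] at hx
    exact ((hI x (le_of_lt hx)).differentiableAt).differentiableWithinAt
  · intro x hx
    rw [interior_Ici] at hx
    rw [(hI x (le_of_lt hx)).deriv]
    have h1 := hInn x (le_of_lt hx)
    have h2 : S x ≤ S 0 := hSanti (Set.self_mem_Ici) (le_of_lt hx : (0:ℝ) ≤ x) (le_of_lt hx)
    nlinarith [mul_nonneg h1 (sub_nonneg.2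
      (hsub.trans' (mul_le_mul_of_nonneg_left h2 hb.le)))]
end
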